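/- For every n, the doubly nonnegative cone D^n, consisting of all n×n real symmetric positive semidefinite matrices whose entries are all nonnegative, is an amenable closed convex cone (in the space of n×n real matrices with the Frobenius norm). -/

import Mathlib

open Metric Bornology

attribute [local instance] Matrix.frobeniusNormedAddCommGroup Matrix.frobeniusNormedSpace

/-- `F` is a face of the convex set `C`. -/
def IsFace {E : Type*} [NormedAddCommGroup E] [NormedSpace ℝ E] (C F : Set E) : Prop :=
  IsClosed F ∧ Convex ℝ F ∧ F ⊆ C ∧
    ∀ x ∈ C, ∀ y ∈ C, ∀ α : ℝ, 0 < α → α < 1 → α • x + (1 - α) • y ∈ F → x ∈ F ∧ y ∈ F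

/-- `F` is an amenable face of `C`. -/
def IsAmenableFace {E : Type*} [NormedAddCommGroup E] [NormedSpace ℝ E] (C F : Set E) : Prop :=
  ∀ B : Set E, IsBounded B → ∃ κ > (0:ℝ),
    ∀ x ∈ (affineSpan ℝ F : Set E) ∩ B, infDist x F ≤ κ * infDist x C

/-- `C` is an amenable convex set: every face of `C` is an amenable face. -/
def AmenableSet {E : Type*} [NormedAddCommGroup E] [NormedSpace ℝ E] (C : Set E) : Prop :=
  ∀ F : Set E, IsFace C F → IsAmenableFace C F

/-- The doubly nonnegative cone: symmetric positive semidefinite matrices with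
nonnegative entries. -/
def doublyNonnegativeCone (n : ℕ) : Set (Matrix (Fin n) (Fin n) ℝ) :=
  {X | X.PosSemidef ∧ ∀ i j, 0 ≤ X i j}

namespace DNNProof

open Matrix

variable {n : ℕ}

local notation "E" => Matrix (Fin n) (Fin n) ℝ

lemma frob_norm_eq (M : E) : ‖M‖ = Real.sqrt (∑ i, ∑ j, (M i j)^2) := by
  rw [Matrix.frobenius_norm_def, Real.sqrt_eq_rpow]
  congr 1
  congr 1
  ext i
  congr 1
  ext j
  rw [show ((2:ℝ)) = ((2:ℕ):ℝ) by norm_num, Real.rpow_natCast, Real.norm_eq_abs, sq_abs]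

lemma entry_abs_le (M : E) (i j : Fin n) : |M i j| ≤ ‖M‖ := by
  rw [frob_norm_eq]
  rw [show |M i j| = Real.sqrt ((M i j)^2) from (Real.sqrt_sq_eq_abs _).symm]
  apply Real.sqrt_le_sqrt
  have h1 : (M i j)^2 ≤ ∑ j', (M i j')^2 :=
    Finset.single_le_sum (f := fun j' => (M i j')^2) (fun _ _ => sq_nonneg _) (Finset.mem_univ j)
  have h2 : (∑ j', (M i j')^2) ≤ ∑ i', ∑ j', (M i' j')^2 :=
    Finset.single_le_sum (f := fun i' => ∑ j', (M i' j')^2)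
      (fun _ _ => Finset.sum_nonneg fun _ _ => sq_nonneg _) (Finset.mem_univ i)
  exact h1.trans h2

lemma quad_abs_le (u : E) (v : Fin n → ℝ) :
    abs (v ⬝ᵥ (u *ᵥ v)) ≤ ‖u‖ * (v ⬝ᵥ v) := by
  have hrw : v ⬝ᵥ (u *ᵥ v) = ∑ p : Fin n × Fin n, u p.1 p.2 * (v p.1 * v p.2) := by
    rw [Fintype.sum_prod_type]
    simp only [dotProduct, Matrix.mulVec, Finset.mul_sum]
    exact Finset.sum_congr rfl fun i _ => Finset.sum_congr rfl fun j _ => by ring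
  have hcs := Finset.sum_mul_sq_le_sq_mul_sq Finset.univ
    (fun p : Fin n × Fin n => u p.1 p.2) (fun p : Fin n × Fin n => v p.1 * v p.2)
  have h1 : ∑ p : Fin n × Fin n, (u p.1 p.2)^2 = ∑ i, ∑ j, (u i j)^2 := by
    rw [Fintype.sum_prod_type]
  have h2 : ∑ p : Fin n × Fin n, (v p.1 * v p.2)^2 = (v ⬝ᵥ v)^2 := by
    rw [Fintype.sum_prod_type]
    simp only [dotProduct, mul_pow, ← Finset.sum_mul, ← Finset.mul_sum]
    rw [sq (∑ i, v i * v i)]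
    congr 1 <;> exact Finset.sum_congr rfl fun i _ => by ring_nf
  rw [hrw]
  have hvv : (0:ℝ) ≤ v ⬝ᵥ v := Finset.sum_nonneg fun i _ => mul_self_nonneg _
  have habs : abs (∑ p : Fin n × Fin n, u p.1 p.2 * (v p.1 * v p.2)) =
      Real.sqrt ((∑ p : Fin n × Fin n, u p.1 p.2 * (v p.1 * v p.2))^2) :=
    (Real.sqrt_sq_eq_abs _).symm
  rw [habs]
  calc Real.sqrt ((∑ p : Fin n × Fin n, u p.1 p.2 * (v p.1 * v p.2))^2)
      ≤ Real.sqrt ((∑ p : Fin n × Fin n, (u p.1 p.2)^2) * ∑ p : Fin n × Fin n, (v p.1 * v p.2)^2) :=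
        Real.sqrt_le_sqrt hcs
    _ = Real.sqrt (∑ p : Fin n × Fin n, (u p.1 p.2)^2) *
          Real.sqrt (∑ p : Fin n × Fin n, (v p.1 * v p.2)^2) :=
        Real.sqrt_mul (Finset.sum_nonneg fun _ _ => sq_nonneg _) _
    _ = ‖u‖ * (v ⬝ᵥ v) := by
        rw [h1, h2, ← frob_norm_eq, Real.sqrt_sq hvv]

lemma star_id (v : Fin n → ℝ) : star v = v := by funext i; simp

lemma psd_vanish {A : E} (hA : A.PosSemidef) {v : Fin n → ℝ}
    (h : v ⬝ᵥ (A *ᵥ v) = 0) : A *ᵥ v = 0 := by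
  apply (hA.dotProduct_mulVec_zero_iff v).mp
  rwa [star_id]

lemma psd_quad_nonneg {A : E} (hA : A.PosSemidef) (v : Fin n → ℝ) :
    0 ≤ v ⬝ᵥ (A *ᵥ v) := by
  have := hA.dotProduct_mulVec_nonneg v
  rwa [star_id] at this

lemma matrix_eq_zero_of_mulVec {X : E} (h : ∀ v, X *ᵥ v = 0) : X = 0 := by
  ext i j
  have := congrFun (h (Pi.single j 1)) i
  simpa [Matrix.mulVec_single] using this

lemma sym_of_psd {A : E} (hA : A.PosSemidef) : Aᵀ = A := by
  have h := hA.1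
  ext i j
  have := congrFun (congrFun h i) j
  simpa [Matrix.conjTranspose_apply] using this

lemma herm_of_sym {A : E} (h : Aᵀ = A) : A.IsHermitian := by
  have : Aᴴ = Aᵀ := by
    ext i j
    simp [Matrix.conjTranspose_apply]
  show Aᴴ = A
  rw [this, h]

lemma exists_finset_span {V : Type*} [AddCommGroup V] [Module ℝ V] [FiniteDimensional ℝ V]
    (s : Set V) : ∃ t : Finset V, ↑t ⊆ s ∧ Submodule.span ℝ (t : Set V) = Submodule.span ℝ s := by
  classical
  obtain ⟨G, hG⟩ := IsNoetherian.noetherian (Submodule.span ℝ s)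
  have hmem : ∀ g : {x // x ∈ G}, ∃ t : Finset V, ↑t ⊆ s ∧ (g : V) ∈ Submodule.span ℝ (t : Set V) := by
    intro g
    have : (g : V) ∈ Submodule.span ℝ s := by
      rw [← hG]; exact Submodule.subset_span g.2
    exact Submodule.mem_span_finite_of_mem_span this
  choose f hf1 hf2 using hmem
  refine ⟨G.attach.biUnion f, ?_, ?_⟩
  · intro x hx
    simp only [Finset.coe_biUnion, Set.mem_iUnion] at hx
    obtain ⟨g, hg, hxg⟩ := hx
    exact hf1 _ hxg
  · apply le_antisymm
    · apply Submodule.span_mono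
      intro x hx
      simp only [Finset.coe_biUnion, Set.mem_iUnion] at hx
      obtain ⟨g, hg, hxg⟩ := hx
      exact hf1 _ hxg
    · rw [← hG]
      apply Submodule.span_le.mpr
      intro g hg
      have : g ∈ Submodule.span ℝ ((f ⟨g, hg⟩ : Finset V) : Set V) := hf2 ⟨g, hg⟩
      refine Submodule.span_mono ?_ this
      intro y hy
      simp only [Finset.coe_biUnion, Set.mem_iUnion]
      exact ⟨⟨g, hg⟩, Finset.mem_attach _ _, hy⟩

lemma range_sup_ker {A : E} (hsym : Aᵀ = A) :
    LinearMap.range A.mulVecLin ⊔ LinearMap.ker A.mulVecLin = ⊤ := by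
  have hbot : LinearMap.range A.mulVecLin ⊓ LinearMap.ker A.mulVecLin = ⊥ := by
    rw [eq_bot_iff]
    intro x hx
    obtain ⟨⟨w, hw⟩, hker⟩ := hx
    simp only [Matrix.mulVecLin_apply] at hw hker
    have hker' : A *ᵥ x = 0 := hker
    have hvm : x ᵥ* A = A *ᵥ x := by
      have h := Matrix.vecMul_transpose (A := A) (x := x)
      rwa [hsym] at h
    have hdot : x ⬝ᵥ x = 0 := by
      calc x ⬝ᵥ x = x ⬝ᵥ (A *ᵥ w) := by rw [hw]
        _ = (x ᵥ* A) ⬝ᵥ w := Matrix.dotProduct_mulVec x A w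
        _ = (A *ᵥ x) ⬝ᵥ w := by rw [hvm]
        _ = 0 := by rw [hker', zero_dotProduct]
    have : x = 0 := dotProduct_self_eq_zero.mp hdot
    simp [this]
  have hrank := LinearMap.finrank_range_add_finrank_ker A.mulVecLin
  have hsum := Submodule.finrank_sup_add_finrank_inf_eq
    (LinearMap.range A.mulVecLin) (LinearMap.ker A.mulVecLin)
  rw [hbot] at hsum
  simp only [finrank_bot, add_zero] at hsum
  apply Submodule.eq_top_of_finrank_eq
  rw [hsum, hrank]

lemma quad_lb {A : E} (hA : A.PosSemidef) (hA0 : A ≠ 0) :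
    ∃ c > 0, ∀ w ∈ LinearMap.range A.mulVecLin, c * (w ⬝ᵥ w) ≤ w ⬝ᵥ (A *ᵥ w) := by
  classical
  set S := LinearMap.range A.mulVecLin with hS
  set Kset : Set (Fin n → ℝ) := (S : Set (Fin n → ℝ)) ∩ {v | v ⬝ᵥ v = 1} with hKset
  have hdotcont : Continuous (fun v : Fin n → ℝ => v ⬝ᵥ v) := by
    simp only [dotProduct]
    exact continuous_finset_sum _ fun i _ => (continuous_apply i).mul (continuous_apply i)
  have hfcont : Continuous (fun v : Fin n → ℝ => v ⬝ᵥ (A *ᵥ v)) := by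
    simp only [dotProduct, Matrix.mulVec]
    apply continuous_finset_sum _ fun i _ => ?_
    exact (continuous_apply i).mul
      (continuous_finset_sum _ fun j _ => continuous_const.mul (continuous_apply j))
  have hKcl : IsClosed Kset := by
    apply IsClosed.inter (Submodule.closed_of_finiteDimensional S)
    exact isClosed_eq hdotcont continuous_const
  have hKbd : Bornology.IsBounded Kset := by
    apply (Metric.isBounded_closedBall (x := (0 : Fin n → ℝ)) (r := 1)).subset
    intro v hv
    rw [Metric.mem_closedBall, dist_zero_right]
    apply pi_norm_le_iff_of_nonneg zero_le_one |>.mpr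
    intro i
    rw [Real.norm_eq_abs, abs_le_one_iff_mul_self_le_one]
    calc v i * v i ≤ ∑ j, v j * v j :=
          Finset.single_le_sum (f := fun j => v j * v j)
            (fun _ _ => mul_self_nonneg _) (Finset.mem_univ i)
      _ = 1 := hv.2
  have hKcpt : IsCompact Kset := Metric.isCompact_iff_isClosed_bounded.mpr ⟨hKcl, hKbd⟩
  have hKne : Kset.Nonempty := by
    obtain ⟨w, hw⟩ : ∃ w, A *ᵥ w ≠ 0 := by
      by_contra h
      push_neg at h
      exact hA0 (matrix_eq_zero_of_mulVec h)
    set z := A *ᵥ w with hz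
    have hzS : z ∈ S := ⟨w, rfl⟩
    have hzz : 0 < z ⬝ᵥ z := by
      rcases lt_or_eq_of_le (Finset.sum_nonneg fun i _ => mul_self_nonneg (z i)) with h | h
      · exact h
      · exact absurd (dotProduct_self_eq_zero.mp h.symm) hw
    set s := Real.sqrt (z ⬝ᵥ z) with hs
    have hs0 : 0 < s := Real.sqrt_pos.mpr hzz
    refine ⟨s⁻¹ • z, S.smul_mem _ hzS, ?_⟩
    show (s⁻¹ • z) ⬝ᵥ (s⁻¹ • z) = 1
    rw [smul_dotProduct, dotProduct_smul, smul_eq_mul, smul_eq_mul, ← mul_assoc]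
    have hss : s * s = z ⬝ᵥ z := Real.mul_self_sqrt hzz.le
    field_simp
    nlinarith [hss]
  obtain ⟨v0, hv0K, hmin⟩ := hKcpt.exists_isMinOn hKne hfcont.continuousOn
  set c := v0 ⬝ᵥ (A *ᵥ v0) with hc
  have hcpos : 0 < c := by
    rcases lt_or_eq_of_le (psd_quad_nonneg hA v0) with h | h
    · exact h
    · exfalso
      have hAv0 : A *ᵥ v0 = 0 := psd_vanish hA h.symm
      obtain ⟨w, hw⟩ := hv0K.1
      simp only [Matrix.mulVecLin_apply] at hw
      have hvm : v0 ᵥ* A = A *ᵥ v0 := by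
        have h' := Matrix.vecMul_transpose (A := A) (x := v0)
        rwa [sym_of_psd hA] at h'
      have hdot : v0 ⬝ᵥ v0 = 0 := by
        calc v0 ⬝ᵥ v0 = v0 ⬝ᵥ (A *ᵥ w) := by rw [hw]
          _ = (v0 ᵥ* A) ⬝ᵥ w := Matrix.dotProduct_mulVec v0 A w
          _ = 0 := by rw [hvm, hAv0, zero_dotProduct]
      rw [hv0K.2] at hdot
      norm_num at hdot
  refine ⟨c, hcpos, ?_⟩
  intro w hwS
  rcases eq_or_ne w 0 with rfl | hw0
  · simp
  have hww : 0 < w ⬝ᵥ w := by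
    rcases lt_or_eq_of_le (Finset.sum_nonneg fun i _ => mul_self_nonneg (w i)) with h | h
    · exact h
    · exact absurd (dotProduct_self_eq_zero.mp h.symm) hw0
  set s := Real.sqrt (w ⬝ᵥ w) with hs
  have hs0 : 0 < s := Real.sqrt_pos.mpr hww
  have hss : s * s = w ⬝ᵥ w := Real.mul_self_sqrt hww.le
  have hmem : s⁻¹ • w ∈ Kset := by
    refine ⟨S.smul_mem _ hwS, ?_⟩
    show (s⁻¹ • w) ⬝ᵥ (s⁻¹ • w) = 1
    rw [smul_dotProduct, dotProduct_smul, smul_eq_mul, smul_eq_mul, ← mul_assoc]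
    field_simp
    nlinarith [hss]
  have hle := hmin hmem
  simp only [Set.mem_setOf_eq] at hle
  have hexp : (s⁻¹ • w) ⬝ᵥ (A *ᵥ (s⁻¹ • w)) = s⁻¹ * s⁻¹ * (w ⬝ᵥ (A *ᵥ w)) := by
    rw [Matrix.mulVec_smul, smul_dotProduct, dotProduct_smul,
      smul_eq_mul, smul_eq_mul, ← mul_assoc]
  rw [hexp] at hle
  have hinv : s⁻¹ * s⁻¹ = (w ⬝ᵥ w)⁻¹ := by rw [← mul_inv, hss]
  rw [hinv] at hle
  have hmul := mul_le_mul_of_nonneg_right hle hww.le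
  calc c * (w ⬝ᵥ w) ≤ ((w ⬝ᵥ w)⁻¹ * (w ⬝ᵥ (A *ᵥ w))) * (w ⬝ᵥ w) := hmul
    _ = w ⬝ᵥ (A *ᵥ w) := by field_simp

lemma sum_mulVec' (s : Finset (Matrix (Fin n) (Fin n) ℝ)) (v : Fin n → ℝ) :
    (∑ Y ∈ s, Y) *ᵥ v = ∑ Y ∈ s, (Y *ᵥ v) := by
  classical
  induction s using Finset.induction_on with
  | empty => simp [Matrix.zero_mulVec]
  | @insert a s ha ih =>
    rw [Finset.sum_insert ha, Finset.sum_insert ha, Matrix.add_mulVec, ih]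

lemma dotProduct_sum' {β : Type*} (s : Finset β) (v : Fin n → ℝ) (f : β → (Fin n → ℝ)) :
    v ⬝ᵥ (∑ Y ∈ s, f Y) = ∑ Y ∈ s, (v ⬝ᵥ f Y) := by
  classical
  induction s using Finset.induction_on with
  | empty => simp
  | @insert a s ha ih =>
    rw [Finset.sum_insert ha, Finset.sum_insert ha, dotProduct_add, ih]

end DNNProof

open Matrix

set_option maxHeartbeats 2000000 in
/-- Corollary 3.5(i): the doubly nonnegative cone is an amenable closed convex cone
(with respect to the Frobenius norm). -/
theorem doublyNonnegative_amenable (n : ℕ) :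
    IsClosed (doublyNonnegativeCone n) ∧ Convex ℝ (doublyNonnegativeCone n) ∧
    (∀ c : ℝ, 0 ≤ c → ∀ X ∈ doublyNonnegativeCone n, c • X ∈ doublyNonnegativeCone n) ∧
    AmenableSet (doublyNonnegativeCone n) := by
  classical
  set C := doublyNonnegativeCone n with hCdef
  have hentry : ∀ i j, Continuous (fun X : Matrix (Fin n) (Fin n) ℝ => X i j) := by
    intro i j
    have hlip : LipschitzWith 1 (fun X : Matrix (Fin n) (Fin n) ℝ => X i j) := by
      apply LipschitzWith.of_dist_le_mul
      intro X Y
      rw [Real.dist_eq, dist_eq_norm, NNReal.coe_one, one_mul]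
      have := DNNProof.entry_abs_le (X - Y) i j
      rwa [Matrix.sub_apply] at this
    exact hlip.continuous
  have hclosed : IsClosed C := by
    have hCeq : C = {X : Matrix (Fin n) (Fin n) ℝ | ∀ i j, X j i = X i j} ∩
        ({X | ∀ v : Fin n → ℝ, 0 ≤ v ⬝ᵥ (X *ᵥ v)} ∩ {X | ∀ i j, 0 ≤ X i j}) := by
      ext X
      constructor
      · rintro ⟨hpsd, hnn⟩
        have hsym := DNNProof.sym_of_psd hpsd
        refine ⟨fun i j => ?_, fun v => DNNProof.psd_quad_nonneg hpsd v, hnn⟩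
        have := congrFun (congrFun hsym i) j
        simpa [Matrix.transpose_apply] using this
      · rintro ⟨hsym, hquad, hnn⟩
        refine ⟨.of_dotProduct_mulVec_nonneg (DNNProof.herm_of_sym ?_) fun v => ?_, hnn⟩
        · ext i j
          simp only [Matrix.transpose_apply]
          exact hsym i j
        · rw [DNNProof.star_id]
          exact hquad v
    rw [hCeq]
    apply IsClosed.inter
    · have hs : {X : Matrix (Fin n) (Fin n) ℝ | ∀ i j, X j i = X i j} =
          ⋂ i, ⋂ j, {X : Matrix (Fin n) (Fin n) ℝ | X j i = X i j} := by
        ext X; simp [Set.mem_iInter]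
      rw [hs]
      exact isClosed_iInter fun i => isClosed_iInter fun j =>
        isClosed_eq (hentry j i) (hentry i j)
    apply IsClosed.inter
    · have hs : {X : Matrix (Fin n) (Fin n) ℝ | ∀ v : Fin n → ℝ, 0 ≤ v ⬝ᵥ (X *ᵥ v)} =
          ⋂ v : Fin n → ℝ, {X : Matrix (Fin n) (Fin n) ℝ | 0 ≤ v ⬝ᵥ (X *ᵥ v)} := by
        ext X; simp [Set.mem_iInter]
      rw [hs]
      refine isClosed_iInter fun v => isClosed_le continuous_const ?_
      have hfun : (fun X : Matrix (Fin n) (Fin n) ℝ => v ⬝ᵥ (X *ᵥ v)) =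
          fun X : Matrix (Fin n) (Fin n) ℝ => ∑ i, v i * ∑ j, X i j * v j := by
        funext X
        simp only [dotProduct, Matrix.mulVec]
      rw [hfun]
      exact continuous_finset_sum _ fun i _ => continuous_const.mul
        (continuous_finset_sum _ fun j _ => (hentry i j).mul continuous_const)
    · have hs : {X : Matrix (Fin n) (Fin n) ℝ | ∀ i j, 0 ≤ X i j} =
          ⋂ i, ⋂ j, {X : Matrix (Fin n) (Fin n) ℝ | 0 ≤ X i j} := by
        ext X; simp [Set.mem_iInter]
      rw [hs]
      exact isClosed_iInter fun i => isClosed_iInter fun j =>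
        isClosed_le continuous_const (hentry i j)
  have hcone : ∀ c : ℝ, 0 ≤ c → ∀ X ∈ C, c • X ∈ C := by
    intro c hc X hX
    refine ⟨.of_dotProduct_mulVec_nonneg (DNNProof.herm_of_sym ?_) fun v => ?_, fun i j => ?_⟩
    · rw [Matrix.transpose_smul, DNNProof.sym_of_psd hX.1]
    · rw [DNNProof.star_id, Matrix.smul_mulVec, dotProduct_smul, smul_eq_mul]
      exact mul_nonneg hc (DNNProof.psd_quad_nonneg hX.1 v)
    · rw [Matrix.smul_apply, smul_eq_mul]
      exact mul_nonneg hc (hX.2 i j)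
  have hadd : ∀ X ∈ C, ∀ Y ∈ C, X + Y ∈ C := by
    intro X hX Y hY
    refine ⟨hX.1.add hY.1, fun i j => ?_⟩
    rw [Matrix.add_apply]
    exact add_nonneg (hX.2 i j) (hY.2 i j)
  have hconv : Convex ℝ C := by
    intro X hX Y hY a b ha hb hab
    exact hadd _ (hcone a ha X hX) _ (hcone b hb Y hY)
  have hC0 : (0 : Matrix (Fin n) (Fin n) ℝ) ∈ C :=
    ⟨Matrix.PosSemidef.zero, fun i j => le_refl 0⟩
  refine ⟨hclosed, hconv, hcone, ?_⟩
  intro F hF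
  obtain ⟨hFcl, hFcx, hFC, hface⟩ := hF
  rcases Set.eq_empty_or_nonempty F with rfl | ⟨x0, hx0⟩
  · intro B hB
    refine ⟨1, one_pos, fun x hx => ?_⟩
    exfalso
    have hmem := hx.1
    rw [AffineSubspace.span_empty] at hmem
    rw [AffineSubspace.bot_coe] at hmem
    exact hmem
  have h0F : (0 : Matrix (Fin n) (Fin n) ℝ) ∈ F := by
    have h2x : (2:ℝ) • x0 ∈ C := hcone 2 (by norm_num) x0 (hFC hx0)
    have hmid : (1/2 : ℝ) • ((2:ℝ) • x0) + (1 - (1/2:ℝ)) • (0 : Matrix (Fin n) (Fin n) ℝ) ∈ F := by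
      rw [smul_smul, smul_zero, add_zero]
      norm_num
      exact hx0
    exact (hface _ h2x _ hC0 (1/2) (by norm_num) (by norm_num) hmid).2
  have hsmulF : ∀ c : ℝ, 0 ≤ c → ∀ X ∈ F, c • X ∈ F := by
    intro c hc X hX
    rcases le_or_gt c 1 with hc1 | hc1
    · have hcc := hFcx hX h0F hc (by linarith : (0:ℝ) ≤ 1 - c) (by ring)
      rwa [smul_zero, add_zero] at hcc
    · have hcpos : 0 < c := by linarith
      have hcinv1 : c⁻¹ < 1 := by
        rw [inv_lt_one_iff₀]
        right
        exact hc1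
      have hcinv0 : 0 < c⁻¹ := by positivity
      have hmid : c⁻¹ • (c • X) + (1 - c⁻¹) • (0 : Matrix (Fin n) (Fin n) ℝ) ∈ F := by
        rw [smul_smul, inv_mul_cancel₀ (ne_of_gt hcpos), one_smul, smul_zero, add_zero]
        exact hX
      exact (hface _ (hcone c hc X (hFC hX)) _ hC0 c⁻¹ hcinv0 hcinv1 hmid).1
  have haddF : ∀ X ∈ F, ∀ Y ∈ F, X + Y ∈ F := by
    intro X hX Y hY
    have hmid : (1/2:ℝ) • X + (1 - (1/2:ℝ)) • Y ∈ F := by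
      apply hFcx hX hY (by norm_num) (by norm_num)
      norm_num
    have h2 := hsmulF 2 (by norm_num) _ hmid
    rwa [smul_add, smul_smul, smul_smul, show (2:ℝ) * (1/2) = 1 by norm_num,
      show (2:ℝ) * (1 - 1/2) = 1 by norm_num, one_smul, one_smul] at h2
  set L := Submodule.span ℝ F with hLdef
  have hFsubL : F ⊆ (L : Set (Matrix (Fin n) (Fin n) ℝ)) := Submodule.subset_span
  have hLrep : ∀ z ∈ L, ∃ a ∈ F, ∃ b ∈ F, z = a - b := by
    intro z hz
    induction hz using Submodule.span_induction with
    | mem w hw => exact ⟨w, hw, 0, h0F, by simp⟩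
    | zero => exact ⟨0, h0F, 0, h0F, by simp⟩
    | add u v hu hv ihu ihv =>
      obtain ⟨a, ha, b, hb, rfl⟩ := ihu
      obtain ⟨a', ha', b', hb', rfl⟩ := ihv
      exact ⟨a + a', haddF a ha a' ha', b + b', haddF b hb b' hb', by abel⟩
    | smul r w hw ihw =>
      obtain ⟨a, ha, b, hb, rfl⟩ := ihw
      rcases le_or_gt 0 r with hr | hr
      · exact ⟨r • a, hsmulF r hr a ha, r • b, hsmulF r hr b hb, by rw [smul_sub]⟩
      · refine ⟨(-r) • b, hsmulF (-r) (by linarith) b hb,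
          (-r) • a, hsmulF (-r) (by linarith) a ha, ?_⟩
        rw [smul_sub, neg_smul, neg_smul]
        abel
  have hCL : ∀ z ∈ C, z ∈ L → z ∈ F := by
    intro z hzC hzL
    obtain ⟨a, ha, b, hb, rfl⟩ := hLrep _ hzL
    have h2b : (2:ℝ) • b ∈ C := hcone 2 (by norm_num) b (hFC hb)
    have hmid : (1/2:ℝ) • (a - b) + (1 - (1/2:ℝ)) • ((2:ℝ) • b) ∈ F := by
      have heq : (1/2:ℝ) • (a - b) + (1 - (1/2:ℝ)) • ((2:ℝ) • b)
          = (1/2:ℝ) • a + (1 - (1/2:ℝ)) • b := by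
        module
      rw [heq]
      exact hFcx ha hb (by norm_num) (by norm_num) (by norm_num)
    exact (hface _ hzC _ h2b (1/2) (by norm_num) (by norm_num) hmid).1
  obtain ⟨t, htF, htspan⟩ := DNNProof.exists_finset_span (F : Set (Matrix (Fin n) (Fin n) ℝ))
  have hsum_mem : ∀ s : Finset (Matrix (Fin n) (Fin n) ℝ), ↑s ⊆ F → (∑ X ∈ s, X) ∈ F := by
    intro s
    induction s using Finset.induction_on with
    | empty => intro _; simpa using h0F
    | @insert a s ha ih =>
      intro hsub
      rw [Finset.sum_insert ha]
      exact haddF _ (hsub (Finset.mem_insert_self a s)) _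
        (ih fun x hx => hsub (Finset.mem_insert_of_mem hx))
  set A := ∑ X ∈ t, X with hAdef
  have hA_F : A ∈ F := hsum_mem t htF
  have hA_C : A ∈ C := hFC hA_F
  have hA_psd : A.PosSemidef := hA_C.1
  have hA_nn : ∀ i j, 0 ≤ A i j := hA_C.2
  have hA_sym : Aᵀ = A := DNNProof.sym_of_psd hA_psd
  have hker_t : ∀ X ∈ (t : Set (Matrix (Fin n) (Fin n) ℝ)), ∀ v, A *ᵥ v = 0 → X *ᵥ v = 0 := by
    intro X hXt v hv
    have h1 : A *ᵥ v = ∑ Y ∈ t, (Y *ᵥ v) := by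
      rw [hAdef, DNNProof.sum_mulVec']
    have hsumv : ∑ Y ∈ t, (v ⬝ᵥ (Y *ᵥ v)) = 0 := by
      have h2 : v ⬝ᵥ (A *ᵥ v) = ∑ Y ∈ t, (v ⬝ᵥ (Y *ᵥ v)) := by
        rw [h1, DNNProof.dotProduct_sum']
      rw [← h2, hv, dotProduct_zero]
    have hnn : ∀ Y ∈ t, 0 ≤ v ⬝ᵥ (Y *ᵥ v) :=
      fun Y hY => DNNProof.psd_quad_nonneg ((hFC (htF hY)).1) v
    have hzero := (Finset.sum_eq_zero_iff_of_nonneg hnn).mp hsumv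
    exact DNNProof.psd_vanish ((hFC (htF hXt)).1) (hzero X hXt)
  have hZ_t : ∀ X ∈ (t : Set (Matrix (Fin n) (Fin n) ℝ)), ∀ i j, A i j = 0 → X i j = 0 := by
    intro X hXt i j hij
    have hsum : ∑ Y ∈ t, Y i j = 0 := by
      rw [← hij, hAdef, Matrix.sum_apply]
    have hnn : ∀ Y ∈ t, 0 ≤ Y i j := fun Y hY => (hFC (htF hY)).2 i j
    exact (Finset.sum_eq_zero_iff_of_nonneg hnn).mp hsum X hXt
  have hkerL : ∀ X ∈ L, ∀ v, A *ᵥ v = 0 → X *ᵥ v = 0 := by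
    intro X hX
    rw [hLdef, ← htspan] at hX
    induction hX using Submodule.span_induction with
    | mem w hw => exact hker_t w hw
    | zero => intro v _; rw [Matrix.zero_mulVec]
    | add u w hu hw ihu ihw =>
      intro v hv
      rw [Matrix.add_mulVec, ihu v hv, ihw v hv, add_zero]
    | smul r w hw ihw =>
      intro v hv
      rw [Matrix.smul_mulVec, ihw v hv, smul_zero]
  have hZL : ∀ X ∈ L, ∀ i j, A i j = 0 → X i j = 0 := by
    intro X hX
    rw [hLdef, ← htspan] at hX
    induction hX using Submodule.span_induction with
    | mem w hw => exact hZ_t w hw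
    | zero => intro i j _; rfl
    | add u w hu hw ihu ihw =>
      intro i j hij
      rw [Matrix.add_apply, ihu i j hij, ihw i j hij, add_zero]
    | smul r w hw ihw =>
      intro i j hij
      rw [Matrix.smul_apply, ihw i j hij, smul_zero]
  have hsymL : ∀ X ∈ L, Xᵀ = X := by
    intro X hX
    induction hX using Submodule.span_induction with
    | mem w hw => exact DNNProof.sym_of_psd (hFC hw).1
    | zero => exact Matrix.transpose_zero
    | add u w hu hw ihu ihw => rw [Matrix.transpose_add, ihu, ihw]
    | smul r w hw ihw => rw [Matrix.transpose_smul, ihw]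
  have haffL : ∀ x ∈ (affineSpan ℝ F : Set (Matrix (Fin n) (Fin n) ℝ)), x ∈ L := by
    intro x hx
    have hh := affineSpan_le_toAffineSubspace_span (k := ℝ) (s := F) hx
    exact hh
  rcases eq_or_ne A 0 with hA0 | hA0
  · intro B hB
    refine ⟨1, one_pos, fun x hx => ?_⟩
    have hxL : x ∈ L := haffL x hx.1
    have hx0' : x = 0 := by
      apply DNNProof.matrix_eq_zero_of_mulVec
      intro v
      exact hkerL x hxL v (by rw [hA0, Matrix.zero_mulVec])
    rw [hx0', Metric.infDist_zero_of_mem h0F, one_mul]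
    exact Metric.infDist_nonneg
  obtain ⟨c, hc, hquadA⟩ := DNNProof.quad_lb hA_psd hA0
  set Zc : Finset (Fin n × Fin n) :=
    Finset.univ.filter (fun p : Fin n × Fin n => A p.1 p.2 ≠ 0) with hZcdef
  have hZc_ne : Zc.Nonempty := by
    by_contra h
    rw [Finset.not_nonempty_iff_eq_empty] at h
    apply hA0
    ext i j
    by_contra hij
    have hmem : (i, j) ∈ Zc := by
      rw [hZcdef]
      simp only [Finset.mem_filter, Finset.mem_univ, true_and]
      simpa using hij
    rw [h] at hmem
    exact absurd hmem (Finset.notMem_empty _)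
  set δ := Zc.inf' hZc_ne (fun p => A p.1 p.2) with hδdef
  have hδpos : 0 < δ := by
    rw [hδdef, Finset.lt_inf'_iff]
    intro p hp
    have hne : A p.1 p.2 ≠ 0 := by
      rw [hZcdef] at hp
      simpa using hp
    exact lt_of_le_of_ne (hA_nn p.1 p.2) (Ne.symm hne)
  have hδle : ∀ i j, A i j ≠ 0 → δ ≤ A i j := by
    intro i j h
    rw [hδdef]
    have hmem : (i, j) ∈ Zc := by
      rw [hZcdef]
      simp only [Finset.mem_filter, Finset.mem_univ, true_and]
      exact h
    exact Finset.inf'_le _ hmem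
  set r := min c δ with hrdef
  have hr : 0 < r := lt_min hc hδpos
  have hSK := DNNProof.range_sup_ker hA_sym
  intro B hB
  obtain ⟨R0, hR0⟩ := (Metric.isBounded_iff_subset_closedBall 0).mp hB
  set R := max R0 0 with hRdef
  have hR0' : (0:ℝ) ≤ R := le_max_right _ _
  set κ := (R + ‖A‖) / r + 1 with hκdef
  have hκ : 0 < κ := by
    rw [hκdef]
    have hq0 : 0 ≤ (R + ‖A‖) / r := by positivity
    linarith
  refine ⟨κ, hκ, fun x hx => ?_⟩
  obtain ⟨hxa, hxB⟩ := hx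
  have hxL : x ∈ L := haffL x hxa
  have hxR : ‖x‖ ≤ R := by
    have hb := hR0 hxB
    rw [Metric.mem_closedBall, dist_zero_right] at hb
    exact hb.trans (le_max_left _ _)
  have hxsym : xᵀ = x := hsymL x hxL
  have hxker : ∀ v, A *ᵥ v = 0 → x *ᵥ v = 0 := hkerL x hxL
  have hxZ : ∀ i j, A i j = 0 → x i j = 0 := hZL x hxL
  have hkey : ∀ y ∈ C, Metric.infDist x F ≤ κ * dist x y := by
    intro y hy
    set d := dist x y with hd
    have hd0 : 0 ≤ d := dist_nonneg
    have hdxy : ‖x - y‖ = d := (dist_eq_norm x y).symm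
    have hdr : 0 < d + r := by linarith
    set lam := d / (d + r) with hlam
    have hlam0 : 0 ≤ lam := div_nonneg hd0 hdr.le
    have hlam1 : 1 - lam = r / (d + r) := by
      rw [hlam, eq_div_iff hdr.ne', sub_mul, div_mul_cancel₀ _ hdr.ne']
      ring
    have hlam1' : 0 ≤ 1 - lam := by rw [hlam1]; positivity
    set q := lam • A + (1 - lam) • x with hq
    have hqL : q ∈ L := L.add_mem (L.smul_mem _ (hFsubL hA_F)) (L.smul_mem _ hxL)
    have hqsym : qᵀ = q := by
      rw [hq, Matrix.transpose_add, Matrix.transpose_smul, Matrix.transpose_smul, hA_sym, hxsym]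
    have hqnn : ∀ i j, 0 ≤ q i j := by
      intro i j
      have hqij : q i j = lam * A i j + (1 - lam) * x i j := by
        rw [hq]
        simp [Matrix.add_apply, Matrix.smul_apply, smul_eq_mul]
      by_cases hAij : A i j = 0
      · rw [hqij, hAij, hxZ i j hAij]
        ring_nf
        exact le_refl 0
      · have h1 : δ ≤ A i j := hδle i j hAij
        have h2 : |x i j - y i j| ≤ d := by
          have h' := DNNProof.entry_abs_le (x - y) i j
          rw [Matrix.sub_apply, hdxy] at h'
          exact h'
        have h3 : -d ≤ x i j := by
          have h4 := (abs_le.mp h2).1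
          have h5 := hy.2 i j
          linarith
        rw [hqij]
        have hrδ : r ≤ δ := min_le_right c δ
        have e1 : lam * δ ≤ lam * A i j := mul_le_mul_of_nonneg_left h1 hlam0
        have e2 : (1 - lam) * (-d) ≤ (1 - lam) * x i j := mul_le_mul_of_nonneg_left h3 hlam1'
        have e3 : 0 ≤ lam * δ + (1 - lam) * (-d) := by
          rw [hlam, hlam1]
          have heq : d / (d + r) * δ + r / (d + r) * (-d) = (d * δ - r * d) / (d + r) := by
            ring
          rw [heq]
          apply div_nonneg _ hdr.le
          nlinarith
        linarith
    have hqpsd : q.PosSemidef := by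
      refine .of_dotProduct_mulVec_nonneg (DNNProof.herm_of_sym hqsym) fun v => ?_
      rw [DNNProof.star_id]
      have hv : v ∈ LinearMap.range A.mulVecLin ⊔ LinearMap.ker A.mulVecLin := by
        rw [hSK]
        trivial
      obtain ⟨v1, hv1, v2, hv2, rfl⟩ := Submodule.mem_sup.mp hv
      have hv2A : A *ᵥ v2 = 0 := hv2
      have hv2x : x *ᵥ v2 = 0 := hxker v2 hv2A
      have hqv2 : q *ᵥ v2 = 0 := by
        rw [hq, Matrix.add_mulVec, Matrix.smul_mulVec, Matrix.smul_mulVec,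
          hv2A, hv2x, smul_zero, smul_zero, add_zero]
      have hq12 : (v1 + v2) ⬝ᵥ (q *ᵥ (v1 + v2)) = v1 ⬝ᵥ (q *ᵥ v1) := by
        rw [Matrix.mulVec_add, hqv2, add_zero, add_dotProduct]
        have hcross : v2 ⬝ᵥ (q *ᵥ v1) = 0 := by
          rw [Matrix.dotProduct_mulVec]
          have hvm : v2 ᵥ* q = q *ᵥ v2 := by
            have h' := Matrix.vecMul_transpose (A := q) (x := v2)
            rwa [hqsym] at h'
          rw [hvm, hqv2, zero_dotProduct]
        rw [hcross, add_zero]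
      rw [hq12]
      have hexp : v1 ⬝ᵥ (q *ᵥ v1) = lam * (v1 ⬝ᵥ (A *ᵥ v1)) + (1 - lam) * (v1 ⬝ᵥ (x *ᵥ v1)) := by
        rw [hq, Matrix.add_mulVec, Matrix.smul_mulVec, Matrix.smul_mulVec,
          dotProduct_add, dotProduct_smul, dotProduct_smul,
          smul_eq_mul, smul_eq_mul]
      rw [hexp]
      set t1 := v1 ⬝ᵥ v1 with ht1
      have ht10 : 0 ≤ t1 := Finset.sum_nonneg fun i _ => mul_self_nonneg _
      have hA1 : c * t1 ≤ v1 ⬝ᵥ (A *ᵥ v1) := hquadA v1 hv1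
      have hy1 : 0 ≤ v1 ⬝ᵥ (y *ᵥ v1) := DNNProof.psd_quad_nonneg hy.1 v1
      have hxy1 : abs (v1 ⬝ᵥ ((x - y) *ᵥ v1)) ≤ ‖x - y‖ * t1 := DNNProof.quad_abs_le (x - y) v1
      have hx1 : -(d * t1) ≤ v1 ⬝ᵥ (x *ᵥ v1) := by
        have hsplit : v1 ⬝ᵥ (x *ᵥ v1) = v1 ⬝ᵥ (y *ᵥ v1) + v1 ⬝ᵥ ((x - y) *ᵥ v1) := by
          rw [Matrix.sub_mulVec, dotProduct_sub]
          ring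
        have hlow := (abs_le.mp hxy1).1
        rw [hdxy] at hlow
        rw [hsplit]
        linarith
      have hrc : r ≤ c := min_le_left c δ
      have hlc : (1 - lam) * d ≤ lam * c := by
        rw [hlam, hlam1]
        have heq1 : r / (d + r) * d = (r * d) / (d + r) := by ring
        have heq2 : d / (d + r) * c = (d * c) / (d + r) := by ring
        rw [heq1, heq2, div_le_div_iff₀ hdr hdr]
        nlinarith [mul_nonneg (mul_nonneg (sub_nonneg.mpr hrc) hd0) hdr.le]
      nlinarith [mul_le_mul_of_nonneg_left hA1 hlam0,
        mul_le_mul_of_nonneg_left hx1 hlam1',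
        mul_le_mul_of_nonneg_right hlc ht10]
    have hqC : q ∈ C := ⟨hqpsd, hqnn⟩
    have hqF : q ∈ F := hCL q hqC hqL
    have h1 : Metric.infDist x F ≤ dist x q := Metric.infDist_le_dist_of_mem hqF
    have hxq : x - q = lam • (x - A) := by
      rw [hq]
      module
    have hdq : dist x q = lam * ‖x - A‖ := by
      rw [dist_eq_norm, hxq, norm_smul, Real.norm_eq_abs, abs_of_nonneg hlam0]
    have hlamle : lam ≤ d / r := by
      rw [hlam]
      apply div_le_div_of_nonneg_left hd0 hr
      linarith
    have hnle : ‖x - A‖ ≤ R + ‖A‖ := by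
      calc ‖x - A‖ ≤ ‖x‖ + ‖A‖ := norm_sub_le x A
        _ ≤ R + ‖A‖ := by linarith
    calc Metric.infDist x F ≤ dist x q := h1
      _ = lam * ‖x - A‖ := hdq
      _ ≤ (d / r) * (R + ‖A‖) := by
          apply mul_le_mul hlamle hnle (norm_nonneg _)
          positivity
      _ = ((R + ‖A‖) / r) * d := by ring
      _ ≤ κ * d := by
          apply mul_le_mul_of_nonneg_right _ hd0
          rw [hκdef]
          linarith
  by_contra hcon
  push_neg at hcon
  have hCne : C.Nonempty := ⟨0, hC0⟩
  have hε0 : 0 < (Metric.infDist x F - κ * Metric.infDist x C) / κ := by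
    apply div_pos _ hκ
    linarith
  have hlt : Metric.infDist x C <
      Metric.infDist x C + (Metric.infDist x F - κ * Metric.infDist x C) / κ := by
    linarith
  obtain ⟨y, hyC, hylt⟩ := (Metric.infDist_lt_iff hCne).mp hlt
  have hk := hkey y hyC
  have hmul : κ * dist x y <
      κ * (Metric.infDist x C + (Metric.infDist x F - κ * Metric.infDist x C) / κ) :=
    mul_lt_mul_of_pos_left hylt hκ
  have hεκ : κ * ((Metric.infDist x F - κ * Metric.infDist x C) / κ)
      = Metric.infDist x F - κ * Metric.infDist x C := by
    field_simp
  have hexp2 : κ * (Metric.infDist x C + (Metric.infDist x F - κ * Metric.infDist x C) / κ)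
      = κ * Metric.infDist x C + κ * ((Metric.infDist x F - κ * Metric.infDist x C) / κ) :=
    mul_add _ _ _
  rw [hexp2, hεκ] at hmul
  linarith
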